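/- In the grid graph G = P_s □ P_t with s, t ≥ 2, for any two distinct vertices x and y, the set of distinctive vertices satisfies |D(x,y)| ≥ s + t − 2. -/

import Mathlib

private lemma pathWalkUp {n : ℕ} : ∀ (d : ℕ) (i j : Fin n), (j : ℕ) = (i : ℕ) + d →
    ∃ w : (SimpleGraph.pathGraph n).Walk i j, w.length = d := by
  intro d
  induction d with
  | zero =>
    intro i j h
    obtain rfl : i = j := Fin.ext (by omega)
    exact ⟨.nil, rfl⟩
  | succ d ih =>
    intro i j h
    have hlt : (i : ℕ) + 1 < n := by have := j.isLt; omega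
    obtain ⟨w, hw⟩ := ih ⟨(i : ℕ) + 1, hlt⟩ j (by simp; omega)
    exact ⟨.cons (SimpleGraph.pathGraph_adj.mpr (Or.inl rfl)) w, by simp [hw]⟩

private lemma pathWalkDist {n : ℕ} (i j : Fin n) :
    ∃ w : (SimpleGraph.pathGraph n).Walk i j, w.length = Nat.dist (i : ℕ) (j : ℕ) := by
  rcases le_total (i : ℕ) (j : ℕ) with h | h
  · obtain ⟨w, hw⟩ := pathWalkUp ((j : ℕ) - (i : ℕ)) i j (by omega)
    exact ⟨w, by rw [hw]; simp [Nat.dist]; omega⟩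
  · obtain ⟨w, hw⟩ := pathWalkUp ((i : ℕ) - (j : ℕ)) j i (by omega)
    exact ⟨w.reverse, by simp [hw, Nat.dist]; omega⟩

private lemma gridWalkLower {s t : ℕ} {x z : Fin s × Fin t}
    (w : ((SimpleGraph.pathGraph s).boxProd (SimpleGraph.pathGraph t)).Walk x z) :
    Nat.dist (x.1 : ℕ) (z.1 : ℕ) + Nat.dist (x.2 : ℕ) (z.2 : ℕ) ≤ w.length := by
  induction w with
  | nil => simp [Nat.dist]
  | @cons u v w h p ih =>
    rw [SimpleGraph.Walk.length_cons]
    rcases h with ⟨h1, h2⟩ | ⟨h1, h2⟩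
    · have h1' := SimpleGraph.pathGraph_adj.mp h1
      have h2' : (u.2 : ℕ) = (v.2 : ℕ) := congrArg Fin.val h2
      simp only [Nat.dist] at *
      omega
    · have h1' := SimpleGraph.pathGraph_adj.mp h1
      have h2' : (u.1 : ℕ) = (v.1 : ℕ) := congrArg Fin.val h2
      simp only [Nat.dist] at *
      omega

private lemma gridDist {s t : ℕ} (hs : 1 ≤ s) (ht : 1 ≤ t) (x z : Fin s × Fin t) :
    ((SimpleGraph.pathGraph s).boxProd (SimpleGraph.pathGraph t)).dist x z
      = Nat.dist (x.1 : ℕ) (z.1 : ℕ) + Nat.dist (x.2 : ℕ) (z.2 : ℕ) := by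
  obtain ⟨x1, x2⟩ := x
  obtain ⟨z1, z2⟩ := z
  refine le_antisymm ?_ ?_
  · obtain ⟨w1, hw1⟩ := pathWalkDist x1 z1
    obtain ⟨w2, hw2⟩ := pathWalkDist x2 z2
    have := SimpleGraph.dist_le ((w1.boxProdLeft (SimpleGraph.pathGraph t) x2).append
      (w2.boxProdRight (SimpleGraph.pathGraph s) z1))
    have e1 : (w1.boxProdLeft (SimpleGraph.pathGraph t) x2).length = w1.length :=
      SimpleGraph.Walk.length_map _ _
    have e2 : (w2.boxProdRight (SimpleGraph.pathGraph s) z1).length = w2.length :=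
      SimpleGraph.Walk.length_map _ _
    rw [SimpleGraph.Walk.length_append, e1, e2, hw1, hw2] at this
    exact this
  · have hcs : (SimpleGraph.pathGraph s).Connected := by
      obtain ⟨n, rfl⟩ := Nat.exists_eq_succ_of_ne_zero (by omega : s ≠ 0)
      exact SimpleGraph.pathGraph_connected n
    have hct : (SimpleGraph.pathGraph t).Connected := by
      obtain ⟨n, rfl⟩ := Nat.exists_eq_succ_of_ne_zero (by omega : t ≠ 0)
      exact SimpleGraph.pathGraph_connected n
    obtain ⟨w, hw⟩ := ((hcs.boxProd hct).preconnected (x1, x2)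
      (z1, z2)).exists_walk_length_eq_dist
    rw [← hw]
    exact gridWalkLower w

/-- In the grid graph `P_s □ P_t` (`s, t ≥ 2`), any two distinct vertices have at least
`s + t - 2` distinctive vertices. -/
theorem grid_distinctive_lower_bound (s t : ℕ) (hs : 2 ≤ s) (ht : 2 ≤ t)
    (x y : Fin s × Fin t) (hxy : x ≠ y) :
    s + t - 2 ≤
      (Finset.univ.filter (fun z : Fin s × Fin t =>
        ((SimpleGraph.pathGraph s).boxProd (SimpleGraph.pathGraph t)).dist x z ≠
          ((SimpleGraph.pathGraph s).boxProd (SimpleGraph.pathGraph t)).dist y z)).card := by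
  classical
  obtain ⟨a, b⟩ := x
  obtain ⟨c, d⟩ := y
  set D := Finset.univ.filter (fun z : Fin s × Fin t =>
        ((SimpleGraph.pathGraph s).boxProd (SimpleGraph.pathGraph t)).dist (a, b) z ≠
          ((SimpleGraph.pathGraph s).boxProd (SimpleGraph.pathGraph t)).dist (c, d) z)
    with hDdef
  have hmem : ∀ (z1 : Fin s) (z2 : Fin t), (z1, z2) ∈ D ↔
      Nat.dist (a : ℕ) (z1 : ℕ) + Nat.dist (b : ℕ) (z2 : ℕ) ≠
        Nat.dist (c : ℕ) (z1 : ℕ) + Nat.dist (d : ℕ) (z2 : ℕ) := by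
    intro z1 z2
    rw [hDdef, Finset.mem_filter]
    simp only [Finset.mem_univ, true_and]
    rw [gridDist (by omega) (by omega) (a, b) (z1, z2),
      gridDist (by omega) (by omega) (c, d) (z1, z2)]
  have hkey : ∀ s' t' : ℕ, 2 ≤ s' → 2 ≤ t' → s' + t' - 2 ≤ s' * (t' - 1) := by
    intro s' t' hs' ht'
    obtain ⟨u, rfl⟩ := Nat.exists_eq_add_of_le hs'
    obtain ⟨v, rfl⟩ := Nat.exists_eq_add_of_le ht'
    have h1 : 2 + v - 1 = 1 + v := by omega
    rw [h1]
    have h2 : (2 + u) * (1 + v) = 2 + u + v + (v + u * v) := by ring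
    omega
  by_cases hac : a = c
  · -- a = c, so b ≠ d
    have hbd : b ≠ d := by
      intro h; exact hxy (by rw [hac, h])
    have hbd' : (b : ℕ) ≠ (d : ℕ) := fun h => hbd (Fin.ext h)
    set T := Finset.univ.filter (fun j : Fin t =>
      ¬ (Nat.dist (b : ℕ) (j : ℕ) = Nat.dist (d : ℕ) (j : ℕ))) with hT
    have hone : (Finset.univ.filter (fun j : Fin t =>
        Nat.dist (b : ℕ) (j : ℕ) = Nat.dist (d : ℕ) (j : ℕ))).card ≤ 1 := by
      refine Finset.card_le_one.mpr ?_
      intro u hu v hv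
      simp only [Finset.mem_filter, Finset.mem_univ, true_and] at hu hv
      simp only [Nat.dist] at hu hv
      exact Fin.ext (by omega)
    have hTcard : t - 1 ≤ T.card := by
      have := Finset.card_filter_add_card_filter_not (s := (Finset.univ : Finset (Fin t)))
        (p := fun j : Fin t => Nat.dist (b : ℕ) (j : ℕ) = Nat.dist (d : ℕ) (j : ℕ))
      rw [Finset.card_univ, Fintype.card_fin] at this
      rw [hT]
      omega
    have hsub : Finset.univ ×ˢ T ⊆ D := by
      intro z hz
      obtain ⟨z1, z2⟩ := z
      rw [Finset.mem_product] at hz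
      have h2 := (Finset.mem_filter.mp hz.2).2
      rw [hmem]
      subst hac
      simp only [Nat.dist] at h2 ⊢
      omega
    calc s + t - 2 ≤ s * (t - 1) := hkey s t hs ht
      _ ≤ s * T.card := Nat.mul_le_mul_left s hTcard
      _ = (Finset.univ ×ˢ T).card := by
          rw [Finset.card_product, Finset.card_univ, Fintype.card_fin]
      _ ≤ D.card := Finset.card_le_card hsub
  · by_cases hbd : b = d
    · -- b = d, a ≠ c
      have hac' : (a : ℕ) ≠ (c : ℕ) := fun h => hac (Fin.ext h)
      set T := Finset.univ.filter (fun k : Fin s =>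
        ¬ (Nat.dist (a : ℕ) (k : ℕ) = Nat.dist (c : ℕ) (k : ℕ))) with hT
      have hone : (Finset.univ.filter (fun k : Fin s =>
          Nat.dist (a : ℕ) (k : ℕ) = Nat.dist (c : ℕ) (k : ℕ))).card ≤ 1 := by
        refine Finset.card_le_one.mpr ?_
        intro u hu v hv
        simp only [Finset.mem_filter, Finset.mem_univ, true_and] at hu hv
        simp only [Nat.dist] at hu hv
        exact Fin.ext (by omega)
      have hTcard : s - 1 ≤ T.card := by
        have := Finset.card_filter_add_card_filter_not
          (s := (Finset.univ : Finset (Fin s)))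
          (p := fun k : Fin s => Nat.dist (a : ℕ) (k : ℕ) = Nat.dist (c : ℕ) (k : ℕ))
        rw [Finset.card_univ, Fintype.card_fin] at this
        rw [hT]
        omega
      have hsub : T ×ˢ Finset.univ ⊆ D := by
        intro z hz
        obtain ⟨z1, z2⟩ := z
        rw [Finset.mem_product] at hz
        have h2 := (Finset.mem_filter.mp hz.1).2
        rw [hmem]
        subst hbd
        simp only [Nat.dist] at h2 ⊢
        omega
      calc s + t - 2 ≤ t * (s - 1) := by
            have := hkey t s ht hs; omega
        _ ≤ t * T.card := Nat.mul_le_mul_left t hTcard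
        _ = (T ×ˢ Finset.univ).card := by
            rw [Finset.card_product, Finset.card_univ, Fintype.card_fin, Nat.mul_comm]
        _ ≤ D.card := Finset.card_le_card hsub
    · -- main case : a ≠ c and b ≠ d
      have hac' : (a : ℕ) ≠ (c : ℕ) := fun h => hac (Fin.ext h)
      have hbd' : (b : ℕ) ≠ (d : ℕ) := fun h => hbd (Fin.ext h)
      set φ : Fin t → Fin s × Fin t :=
        fun j => if (a, j) ∈ D then (a, j) else (c, j) with hφ
      set ψ : Fin s → Fin s × Fin t :=
        fun k => if (k, b) ∈ D then (k, b) else (k, d) with hψ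
      have hφ2 : ∀ j, (φ j).2 = j := by
        intro j; rw [hφ]; by_cases h : (a, j) ∈ D <;> simp [h]
      have hφ1 : ∀ j, (φ j).1 = a ∨ (φ j).1 = c := by
        intro j; rw [hφ]; by_cases h : (a, j) ∈ D <;> simp [h]
      have hψ1 : ∀ k, (ψ k).1 = k := by
        intro k; rw [hψ]; by_cases h : (k, b) ∈ D <;> simp [h]
      have hφD : ∀ j, φ j ∈ D := by
        intro j
        rw [hφ]
        by_cases h : (a, j) ∈ D
        · simpa [h] using h
        · simp only [if_neg h]
          rw [hmem a j] at h
          push_neg at h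
          rw [hmem c j]
          simp only [Nat.dist] at h ⊢
          omega
      have hψD : ∀ k, ψ k ∈ D := by
        intro k
        rw [hψ]
        by_cases h : (k, b) ∈ D
        · simpa [h] using h
        · simp only [if_neg h]
          rw [hmem k b] at h
          push_neg at h
          rw [hmem k d]
          simp only [Nat.dist] at h ⊢
          omega
      have hφinj : Function.Injective φ := by
        intro u v h
        rw [← hφ2 u, ← hφ2 v, h]
      have hψinj : Function.Injective ψ := by
        intro u v h
        rw [← hψ1 u, ← hψ1 v, h]
      set S1 := Finset.image φ Finset.univ with hS1
      set S2 := Finset.image ψ Finset.univ \ {ψ a, ψ c} with hS2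
      have hS1card : S1.card = t := by
        rw [hS1, Finset.card_image_of_injective _ hφinj, Finset.card_univ, Fintype.card_fin]
      have hS2card : s - 2 ≤ S2.card := by
        have h1 := Finset.le_card_sdiff ({ψ a, ψ c} : Finset (Fin s × Fin t))
          (Finset.image ψ Finset.univ)
        have h2 : ({ψ a, ψ c} : Finset (Fin s × Fin t)).card ≤ 2 := by
          apply Finset.card_insert_le _ _ |>.trans
          simp
        rw [Finset.card_image_of_injective _ hψinj, Finset.card_univ, Fintype.card_fin] at h1
        rw [hS2]
        omega
      have hdisj : Disjoint S1 S2 := by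
        rw [Finset.disjoint_left]
        intro z hz1 hz2
        obtain ⟨j, _, rfl⟩ := Finset.mem_image.mp hz1
        obtain ⟨hz2', hz2''⟩ := Finset.mem_sdiff.mp hz2
        obtain ⟨k, _, hk⟩ := Finset.mem_image.mp hz2'
        have hka : k ≠ a := by
          rintro rfl
          exact hz2'' (by rw [← hk]; simp)
        have hkc : k ≠ c := by
          rintro rfl
          exact hz2'' (by rw [← hk]; simp)
        have h1 : (φ j).1 = k := by rw [← hk, hψ1]
        rcases hφ1 j with h | h
        · exact hka (h1 ▸ h)
        · exact hkc (h1 ▸ h)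
      have hsub : S1 ∪ S2 ⊆ D := by
        intro z hz
        rcases Finset.mem_union.mp hz with h | h
        · obtain ⟨j, _, rfl⟩ := Finset.mem_image.mp h
          exact hφD j
        · obtain ⟨k, _, rfl⟩ := Finset.mem_image.mp (Finset.mem_sdiff.mp h).1
          exact hψD k
      calc s + t - 2 ≤ t + (s - 2) := by omega
        _ ≤ S1.card + S2.card := by omega
        _ = (S1 ∪ S2).card := (Finset.card_union_of_disjoint hdisj).symm
        _ ≤ D.card := Finset.card_le_card hsub
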